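/- Let ε^{(1)},...,ε^{(K)} be i.i.d. standard Gaussians, δ ∈ ℝ, and let ε₀ = ε^{(m)} where m = argmin_i |δ + ε^{(i)}|. Then ε₀ has density p(u) = K·φ(u)·(1 - F(|δ + u|))^{K-1}, where F is the CDF of |δ + Z| for Z ~ N(0,1), i.e., F(v) = Φ(v - δ) - Φ(-v - δ) for v ≥ 0 and F(v)=0 for v < 0. -/

import Mathlib

open MeasureTheory ProbabilityTheory Real Set

noncomputable def stdPhi (z : ℝ) : ℝ := (Real.sqrt (2 * Real.pi))⁻¹ * Real.exp (-z ^ 2 / 2)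

noncomputable def stdCDF (z : ℝ) : ℝ := ∫ u in Set.Iic z, stdPhi u

/-- CDF of `|δ + Z|` for `Z ~ N(0,1)`. -/
noncomputable def absShiftCDF (δ v : ℝ) : ℝ :=
  if 0 ≤ v then stdCDF (v - δ) - stdCDF (-v - δ) else 0

lemma stdPhi_eq : stdPhi = gaussianPDFReal 0 1 := by
  funext x
  simp [stdPhi, gaussianPDFReal]

lemma stdPhi_nonneg (x : ℝ) : 0 ≤ stdPhi x := by
  rw [stdPhi_eq]; exact gaussianPDFReal_nonneg 0 1 x

lemma integrable_stdPhi : Integrable stdPhi := by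
  rw [stdPhi_eq]; exact integrable_gaussianPDFReal 0 1

lemma stdCDF_mono : Monotone stdCDF := by
  intro a b hab
  exact setIntegral_mono_set integrable_stdPhi.integrableOn
    (Filter.Eventually.of_forall stdPhi_nonneg)
    (HasSubset.Subset.eventuallyLE (Set.Iic_subset_Iic.mpr hab))

lemma measurable_stdCDF : Measurable stdCDF := stdCDF_mono.measurable

lemma nu_apply (s : Set ℝ) :
    gaussianReal 0 1 s = ENNReal.ofReal (∫ x in s, stdPhi x) := by
  rw [gaussianReal_apply_eq_integral 0 one_ne_zero s, stdPhi_eq]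

instance : NullSingletonClass (gaussianReal 0 1) :=
  ⟨fun x => gaussianReal_absolutelyContinuous 0 one_ne_zero (measure_singleton x)⟩

lemma nu_Icc (a b : ℝ) : gaussianReal 0 1 (Set.Icc a b)
    = ENNReal.ofReal (stdCDF b - stdCDF a) := by
  rcases le_or_gt a b with hab | hab
  · rw [nu_apply, integral_Icc_eq_integral_Ioc, stdCDF, stdCDF,
      intervalIntegral.integral_Iic_sub_Iic integrable_stdPhi.integrableOn
        integrable_stdPhi.integrableOn, intervalIntegral.integral_of_le hab]
  · rw [Set.Icc_eq_empty (not_le.mpr hab)]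
    rw [ENNReal.ofReal_eq_zero.mpr, measure_empty]
    have := stdCDF_mono hab.le
    linarith

lemma absSet_eq (δ v : ℝ) : {x : ℝ | |δ + x| ≤ v} = Set.Icc (-v - δ) (v - δ) := by
  ext x
  simp only [Set.mem_setOf_eq, Set.mem_Icc, abs_le]
  constructor <;> intro h <;> constructor <;> linarith [h.1, h.2]

lemma nu_absSet (δ v : ℝ) (hv : 0 ≤ v) :
    gaussianReal 0 1 {x : ℝ | |δ + x| ≤ v} = ENNReal.ofReal (absShiftCDF δ v) := by
  rw [absSet_eq, nu_Icc, absShiftCDF, if_pos hv]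

lemma absShiftCDF_nonneg (δ v : ℝ) : 0 ≤ absShiftCDF δ v := by
  rw [absShiftCDF]
  split
  · have : (-v - δ) ≤ v - δ := by linarith
    linarith [stdCDF_mono this]
  · exact le_refl _
lemma absShiftCDF_le_one (δ v : ℝ) (hv : 0 ≤ v) : absShiftCDF δ v ≤ 1 := by
  have h := nu_absSet δ v hv
  have h2 : gaussianReal 0 1 {x : ℝ | |δ + x| ≤ v} ≤ 1 := prob_le_one
  rw [h] at h2
  exact ENNReal.ofReal_le_one.mp h2

lemma measurable_absSet (δ v : ℝ) : MeasurableSet {x : ℝ | |δ + x| ≤ v} := by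
  rw [absSet_eq]; exact measurableSet_Icc

lemma nu_gt (δ u : ℝ) :
    gaussianReal 0 1 {x : ℝ | |δ + u| < |δ + x|}
      = ENNReal.ofReal (1 - absShiftCDF δ (|δ + u|)) := by
  have hc : {x : ℝ | |δ + u| < |δ + x|} = {x : ℝ | |δ + x| ≤ |δ + u|}ᶜ := by
    ext x; simp [not_le]
  rw [hc, measure_compl (measurable_absSet δ _) (measure_ne_top _ _),
    nu_absSet δ _ (abs_nonneg _), measure_univ,
    ← ENNReal.ofReal_one, ← ENNReal.ofReal_sub _ (absShiftCDF_nonneg δ _)]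

lemma measurable_oneSubF (δ : ℝ) :
    Measurable (fun u : ℝ => 1 - absShiftCDF δ (|δ + u|)) := by
  have : (fun u : ℝ => absShiftCDF δ (|δ + u|))
      = fun u => stdCDF (|δ + u| - δ) - stdCDF (-|δ + u| - δ) := by
    funext u; rw [absShiftCDF, if_pos (abs_nonneg _)]
  refine measurable_const.sub ?_
  rw [this]
  have habs : Measurable (fun u : ℝ => |δ + u|) :=
    (measurable_const.add measurable_id).abs
  exact (measurable_stdCDF.comp (habs.sub measurable_const)).sub
    (measurable_stdCDF.comp (habs.neg.sub measurable_const))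

lemma oneSubF_nonneg (δ u : ℝ) : 0 ≤ 1 - absShiftCDF δ (|δ + u|) :=
  sub_nonneg.mpr (absShiftCDF_le_one δ _ (abs_nonneg _))
section Main

variable {n : ℕ} (δ : ℝ)

local notation "ν" => gaussianReal 0 1
local notation "μp" => Measure.pi (fun _ : Fin (n+1) => gaussianReal 0 1)
local notation "πr" => Measure.pi (fun _ : Fin n => gaussianReal 0 1)

lemma prod_decomp (i : Fin (n+1)) (S : Set (Fin (n+1) → ℝ)) (hS : MeasurableSet S) :
    μp S = ∫⁻ y, πr {r : Fin n → ℝ | i.insertNth y r ∈ S} ∂ν := by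
  have hmp := measurePreserving_piFinSuccAbove (fun _ : Fin (n+1) => ν) i
  set e := MeasurableEquiv.piFinSuccAbove (fun _ : Fin (n+1) => ℝ) i with he
  have hsymm : ∀ (y : ℝ) (r : Fin n → ℝ), e.symm (y, r) = i.insertNth y r := fun y r => rfl
  have h1 : μp S = (Measure.prod ν πr) (e.symm ⁻¹' S) := by
    rw [← hmp.map_eq, MeasurableEquiv.map_apply]
    congr 1
    ext x
    simp
  rw [h1, Measure.prod_apply (e.symm.measurable hS)]
  rfl

lemma null_graph (i j : Fin (n+1)) (hji : j ≠ i) (g : ℝ → ℝ) (hg : Measurable g) :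
    μp {ε : Fin (n+1) → ℝ | ε j = g (ε i)} = 0 := by
  have hS : MeasurableSet {ε : Fin (n+1) → ℝ | ε j = g (ε i)} :=
    measurableSet_eq_fun (measurable_pi_apply j) (hg.comp (measurable_pi_apply i))
  rw [prod_decomp i _ hS]
  obtain ⟨j', hj'⟩ := Fin.exists_succAbove_eq hji
  have : ∀ y : ℝ, {r : Fin n → ℝ | i.insertNth y r ∈ {ε : Fin (n+1) → ℝ | ε j = g (ε i)}}
      = {r : Fin n → ℝ | r j' = g y} := by
    intro y
    ext r
    simp only [Set.mem_setOf_eq, ← hj', Fin.insertNth_apply_succAbove,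
      Fin.insertNth_apply_same]
  simp only [this]
  simp [Measure.pi_hyperplane (fun _ : Fin n => ν) j']

end Main
section Main2

variable {n : ℕ} (δ : ℝ)

local notation "ν" => gaussianReal 0 1
local notation "μp" => Measure.pi (fun _ : Fin (n+1) => gaussianReal 0 1)
local notation "πr" => Measure.pi (fun _ : Fin n => gaussianReal 0 1)

lemma measurable_strict_set (i : Fin (n+1)) :
    MeasurableSet {ε : Fin (n+1) → ℝ | ∀ j, j ≠ i → |δ + ε i| < |δ + ε j|} := by
  have h : {ε : Fin (n+1) → ℝ | ∀ j, j ≠ i → |δ + ε i| < |δ + ε j|}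
      = ⋂ j, ⋂ (_ : j ≠ i), {ε : Fin (n+1) → ℝ | |δ + ε i| < |δ + ε j|} := by
    ext ε; simp
  rw [h]
  exact MeasurableSet.iInter fun j => MeasurableSet.iInter fun _ =>
    measurableSet_lt ((measurable_const.add (measurable_pi_apply i)).abs)
      ((measurable_const.add (measurable_pi_apply j)).abs)

lemma Si_measure (A : Set ℝ) (hA : MeasurableSet A) (i : Fin (n+1)) :
    μp ((fun ε : Fin (n+1) → ℝ => ε i) ⁻¹' A
        ∩ {ε : Fin (n+1) → ℝ | ∀ j, j ≠ i → |δ + ε i| < |δ + ε j|})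
      = ∫⁻ y in A, (ENNReal.ofReal (1 - absShiftCDF δ (|δ + y|))) ^ n ∂ν := by
  classical
  set S := (fun ε : Fin (n+1) → ℝ => ε i) ⁻¹' A
      ∩ {ε : Fin (n+1) → ℝ | ∀ j, j ≠ i → |δ + ε i| < |δ + ε j|} with hSdef
  have hSmeas : MeasurableSet S :=
    ((measurable_pi_apply i) hA).inter (measurable_strict_set δ i)
  rw [prod_decomp i S hSmeas]
  have hslice : ∀ y : ℝ, {r : Fin n → ℝ | i.insertNth y r ∈ S}
      = if y ∈ A then Set.pi Set.univ (fun _ : Fin n => {x : ℝ | |δ + y| < |δ + x|})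
        else (∅ : Set (Fin n → ℝ)) := by
    intro y
    split_ifs with hy
    · ext r
      simp only [hSdef, Set.mem_setOf_eq, Set.mem_inter_iff, Set.mem_preimage,
        Fin.insertNth_apply_same, Set.mem_pi, Set.mem_univ, forall_true_left]
      constructor
      · rintro ⟨-, h2⟩ j'
        have := h2 (i.succAbove j') (Fin.succAbove_ne i j')
        rwa [Fin.insertNth_apply_succAbove] at this
      · intro h
        refine ⟨hy, fun j hj => ?_⟩
        obtain ⟨j', rfl⟩ := Fin.exists_succAbove_eq hj
        rw [Fin.insertNth_apply_succAbove]
        exact h j'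
    · ext r
      simp [hSdef, Fin.insertNth_apply_same, hy]
  have hval : ∀ y : ℝ, πr {r : Fin n → ℝ | i.insertNth y r ∈ S}
      = A.indicator (fun y => (ENNReal.ofReal (1 - absShiftCDF δ (|δ + y|))) ^ n) y := by
    intro y
    rw [hslice y]
    split_ifs with hy
    · rw [Set.indicator_of_mem hy, Measure.pi_pi]
      simp [nu_gt δ y, Finset.prod_const]
    · simp [Set.indicator_of_notMem hy]
  simp only [hval]
  rw [lintegral_indicator hA]

end Main2
lemma measurable_stdPhi : Measurable stdPhi := by
  rw [stdPhi_eq]; exact measurable_gaussianPDFReal 0 1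

/-- The best-of-`K` selected noise (the coordinate minimizing `|δ + ε i|`) has density
`u ↦ K φ(u) (1 - F(|δ+u|))^{K-1}`. -/
theorem stmt_9 (K : ℕ) (hK : 1 ≤ K) (δ : ℝ) (f : (Fin K → ℝ) → ℝ)
    (hfm : Measurable f)
    (hsel : ∀ ε : Fin K → ℝ, (∃ i, f ε = ε i) ∧ ∀ i, |δ + f ε| ≤ |δ + ε i|) :
    ∀ A : Set ℝ, MeasurableSet A →
      (Measure.map f (Measure.pi fun _ : Fin K => gaussianReal 0 1)) A
        = ENNReal.ofReal
            (∫ u in A, (K : ℝ) * stdPhi u * (1 - absShiftCDF δ (|δ + u|)) ^ (K - 1)) := by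
  obtain ⟨n, rfl⟩ : ∃ n, K = n + 1 := ⟨K - 1, (Nat.succ_pred_eq_of_pos hK).symm⟩
  intro A hA
  classical
  rw [Measure.map_apply hfm hA]
  set μp := Measure.pi (fun _ : Fin (n+1) => gaussianReal 0 1) with hμp
  set S : Fin (n+1) → Set (Fin (n+1) → ℝ) := fun i =>
    (fun ε : Fin (n+1) → ℝ => ε i) ⁻¹' A
      ∩ {ε : Fin (n+1) → ℝ | ∀ j, j ≠ i → |δ + ε i| < |δ + ε j|} with hSdef
  have hSm : ∀ i, MeasurableSet (S i) := fun i =>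
    ((measurable_pi_apply i) hA).inter (measurable_strict_set δ i)
  set T : Set (Fin (n+1) → ℝ) :=
    ⋃ (p : Fin (n+1) × Fin (n+1)), ⋃ (_ : p.1 ≠ p.2),
      ({ε : Fin (n+1) → ℝ | ε p.1 = ε p.2}
        ∪ {ε : Fin (n+1) → ℝ | ε p.1 = -(2*δ) - ε p.2}) with hTdef
  have hT : μp T = 0 := by
    refine measure_iUnion_null fun p => measure_iUnion_null fun hp =>
      measure_union_null ?_ ?_
    · exact null_graph p.2 p.1 hp id measurable_id
    · exact null_graph p.2 p.1 hp (fun x => -(2*δ) - x)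
        (measurable_const.sub measurable_id)
  have hUf : (⋃ i, S i) ⊆ f ⁻¹' A := by
    intro ε hε
    rw [Set.mem_iUnion] at hε
    obtain ⟨i, hiA, hlt⟩ := hε
    obtain ⟨⟨j, hj⟩, hmin⟩ := hsel ε
    have hji : j = i := by
      by_contra hne
      have h1 := hlt j hne
      have h2 := hmin i
      rw [hj] at h2
      exact absurd h1 (not_lt.mpr h2)
    rw [Set.mem_preimage, hj, hji]
    exact hiA
  have hsub2 : f ⁻¹' A ⊆ (⋃ i, S i) ∪ T := by
    intro ε hε
    obtain ⟨⟨i, hi⟩, hmin⟩ := hsel ε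
    by_cases hcase : ∀ j, j ≠ i → |δ + ε i| < |δ + ε j|
    · left
      rw [Set.mem_iUnion]
      exact ⟨i, ⟨by rw [Set.mem_preimage, ← hi]; exact hε, hcase⟩⟩
    · right
      push_neg at hcase
      obtain ⟨j, hj, hle⟩ := hcase
      have hge : |δ + ε i| ≤ |δ + ε j| := by rw [← hi]; exact hmin j
      have heq : |δ + ε i| = |δ + ε j| := le_antisymm hge hle
      rw [hTdef, Set.mem_iUnion]
      refine ⟨(i, j), Set.mem_iUnion.mpr ⟨Ne.symm hj, ?_⟩⟩
      rcases abs_eq_abs.mp heq with h | h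
      · exact Or.inl (by simpa using add_left_cancel h)
      · exact Or.inr (by simp only [Set.mem_setOf_eq]; linarith)
  have hdisj : Pairwise (Function.onFun Disjoint S) := by
    intro i j hij
    rw [Function.onFun, Set.disjoint_left]
    intro ε hεi hεj
    exact lt_asymm (hεi.2 j (Ne.symm hij)) (hεj.2 i hij)
  have hkey : μp (f ⁻¹' A) = μp (⋃ i, S i) := by
    refine le_antisymm ?_ (measure_mono hUf)
    calc μp (f ⁻¹' A) ≤ μp ((⋃ i, S i) ∪ T) := measure_mono hsub2
      _ ≤ μp (⋃ i, S i) + μp T := measure_union_le _ _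
      _ = μp (⋃ i, S i) := by rw [hT, add_zero]
  rw [hkey, measure_iUnion hdisj hSm]
  simp only [hSdef, hμp, Si_measure δ A hA]
  rw [tsum_fintype, Finset.sum_const, Finset.card_univ, Fintype.card_fin]
  -- now convert both sides
  have hφmeas : Measurable (fun u : ℝ => stdPhi u * (1 - absShiftCDF δ (|δ + u|)) ^ n) :=
    measurable_stdPhi.mul ((measurable_oneSubF δ).pow_const n)
  have hoF : ∀ u : ℝ, 0 ≤ (1 - absShiftCDF δ (|δ + u|)) ^ n :=
    fun u => pow_nonneg (oneSubF_nonneg δ u) n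
  have hoF1 : ∀ u : ℝ, (1 - absShiftCDF δ (|δ + u|)) ^ n ≤ 1 :=
    fun u => pow_le_one₀ (oneSubF_nonneg δ u)
      (by linarith [absShiftCDF_nonneg δ (|δ + u|)])
  have hI : ∫⁻ y in A, (ENNReal.ofReal (1 - absShiftCDF δ (|δ + y|))) ^ n
        ∂(gaussianReal 0 1)
      = ∫⁻ y in A, ENNReal.ofReal (stdPhi y * (1 - absShiftCDF δ (|δ + y|)) ^ n) := by
    rw [gaussianReal_of_var_ne_zero 0 one_ne_zero, restrict_withDensity hA,
      lintegral_withDensity_eq_lintegral_mul _ (measurable_gaussianPDF 0 1)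
        (((measurable_oneSubF δ).ennreal_ofReal).pow_const n)]
    congr 1
    funext y
    simp only [Pi.mul_apply, gaussianPDF, ← stdPhi_eq]
    rw [← ENNReal.ofReal_pow (oneSubF_nonneg δ y),
      ← ENNReal.ofReal_mul (stdPhi_nonneg y)]
  rw [hI]
  have hg : Measurable (fun u : ℝ =>
      ((n+1 : ℕ) : ℝ) * stdPhi u * (1 - absShiftCDF δ (|δ + u|)) ^ n) :=
    (measurable_const.mul measurable_stdPhi).mul ((measurable_oneSubF δ).pow_const n)
  have hint : Integrable (fun u : ℝ =>
      ((n+1 : ℕ) : ℝ) * stdPhi u * (1 - absShiftCDF δ (|δ + u|)) ^ n)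
      (volume.restrict A) := by
    refine Integrable.mono ((integrable_stdPhi.const_mul ((n+1 : ℕ) : ℝ)).restrict)
      hg.aestronglyMeasurable (Filter.Eventually.of_forall fun u => ?_)
    have hnn : (0:ℝ) ≤ ((n+1 : ℕ) : ℝ) * stdPhi u :=
      mul_nonneg (by positivity) (stdPhi_nonneg u)
    rw [Real.norm_eq_abs, Real.norm_eq_abs, abs_of_nonneg (mul_nonneg hnn (hoF u)),
      abs_of_nonneg hnn]
    exact mul_le_of_le_one_right hnn (hoF1 u)
  have hnonneg : 0 ≤ᵐ[volume.restrict A] (fun u : ℝ =>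
      ((n+1 : ℕ) : ℝ) * stdPhi u * (1 - absShiftCDF δ (|δ + u|)) ^ n) :=
    Filter.Eventually.of_forall fun u =>
      mul_nonneg (mul_nonneg (by positivity) (stdPhi_nonneg u)) (hoF u)
  simp only [Nat.add_sub_cancel]
  rw [ofReal_integral_eq_lintegral_ofReal hint hnonneg]
  have hconv : ∀ u : ℝ, ENNReal.ofReal
      (((n+1 : ℕ) : ℝ) * stdPhi u * (1 - absShiftCDF δ (|δ + u|)) ^ n)
      = ((n+1 : ℕ) : ENNReal) * ENNReal.ofReal
          (stdPhi u * (1 - absShiftCDF δ (|δ + u|)) ^ n) := by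
    intro u
    rw [mul_assoc, ENNReal.ofReal_mul (by positivity), ENNReal.ofReal_natCast]
  simp only [hconv]
  rw [lintegral_const_mul _ hφmeas.ennreal_ofReal]
  rw [nsmul_eq_mul]
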